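/- For every n ≥ 0 the infinite Fibonacci word f has exactly one right-special factor of length n, and this unique right-special factor of length n is the reversal of the prefix f[0..n-1]. -/
import Mathlib


/-- The Fibonacci morphism φ: 0 ↦ 01, 1 ↦ 0. -/
def fibPhi (w : List ℕ) : List ℕ := (w.map (fun c => if c = 0 then [0, 1] else [0])).flatten

/-- The infinite Fibonacci word f = 0100101001001⋯, the fixed point of φ starting with 0. -/
def fibWord (i : ℕ) : ℕ := ((fibPhi^[i + 2]) [0]).getD i 0

/-- A finite word is a factor of the infinite Fibonacci word. -/
def IsFibFactor (x : List ℕ) : Prop :=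
  ∃ i : ℕ, x = (List.range x.length).map (fun t => fibWord (i + t))

/-- The prefix of the Fibonacci word of length n. -/
def fibPrefix (n : ℕ) : List ℕ := (List.range n).map fibWord

/-- window of the fibonacci word -/
def fw (i n : ℕ) : List ℕ := (List.range n).map (fun t => fibWord (i + t))

@[simp] lemma fw_length (i n : ℕ) : (fw i n).length = n := by simp [fw]

@[simp] lemma fw_zero (i : ℕ) : fw i 0 = [] := by simp [fw]

lemma fw_succ_left (i n : ℕ) : fw i (n+1) = fibWord i :: fw (i+1) n := by
  simp [fw, List.range_succ_eq_map, Function.comp,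
    Nat.add_comm, Nat.add_left_comm, Nat.add_assoc]

lemma fw_add (i m n : ℕ) : fw i (m+n) = fw i m ++ fw (i+m) n := by
  simp [fw, List.range_add, Nat.add_comm, Nat.add_left_comm, Nat.add_assoc, Function.comp]

lemma fibPrefix_eq_fw (n : ℕ) : fibPrefix n = fw 0 n := by simp [fibPrefix, fw]

lemma isFactor_iff (x : List ℕ) : IsFibFactor x ↔ ∃ i, x = fw i x.length := Iff.rfl

lemma factor_fw (i n : ℕ) : IsFibFactor (fw i n) := ⟨i, by simp [fw]⟩

def P (k : ℕ) : List ℕ := fibPhi^[k] [0]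

lemma fibPhi_append (u v : List ℕ) : fibPhi (u ++ v) = fibPhi u ++ fibPhi v := by
  simp [fibPhi]

lemma fibPhi_cons (c : ℕ) (w : List ℕ) :
    fibPhi (c :: w) = (if c = 0 then [0,1] else [0]) ++ fibPhi w := by
  simp [fibPhi]

@[simp] lemma P_zero : P 0 = [0] := rfl

lemma P_succ (k : ℕ) : P (k+1) = fibPhi (P k) := by
  simp [P, Function.iterate_succ_apply']

lemma P_one : P 1 = [0,1] := by simp [P_succ, fibPhi]

lemma P_add_two (k : ℕ) : P (k+2) = P (k+1) ++ P k := by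
  induction k with
  | zero => rfl
  | succ k ih =>
      conv_lhs => rw [P_succ (k+2), ih, fibPhi_append, ← P_succ, ← P_succ]

@[simp] lemma P_length (k : ℕ) : (P k).length = Nat.fib (k+2) := by
  induction k using Nat.strong_induction_on with
  | _ k ih =>
    match k with
    | 0 => rfl
    | 1 => rfl
    | (k+2) =>
      rw [P_add_two, List.length_append, ih (k+1) (by omega), ih k (by omega)]
      have h2 : Nat.fib (k+2+2) = Nat.fib (k+2) + Nat.fib (k+3) := Nat.fib_add_two
      have h3 : Nat.fib (k+1+2) = Nat.fib (k+3) := rfl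
      omega

lemma fib_ge (k : ℕ) : k + 1 ≤ Nat.fib (k+2) := by
  induction k with
  | zero => simp
  | succ k ih =>
      have h1 : 1 ≤ Nat.fib (k+1) := Nat.fib_pos.2 (by omega)
      have h2 : Nat.fib (k+1+2) = Nat.fib (k+1) + Nat.fib (k+2) := Nat.fib_add_two
      omega

lemma P_ne_nil (k : ℕ) : P k ≠ [] := by
  have h1 := P_length k
  have h2 := fib_ge k
  intro h
  rw [h] at h1
  simp at h1
  omega

lemma P_prefix_succ (k : ℕ) : P k <+: P (k+1) := by
  match k with
  | 0 => exact ⟨[1], rfl⟩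
  | (k+1) => exact ⟨P k, (P_add_two k).symm⟩

lemma P_prefix_mono {k k' : ℕ} (h : k ≤ k') : P k <+: P k' := by
  induction h with
  | refl => exact List.prefix_refl _
  | step h ih => exact ih.trans (P_prefix_succ _)

lemma getD_of_prefix {u v : List ℕ} (h : u <+: v) {i : ℕ} (hi : i < u.length) :
    v.getD i 0 = u.getD i 0 := by
  obtain ⟨w, rfl⟩ := h
  rw [List.getD_eq_getElem?_getD, List.getD_eq_getElem?_getD,
    List.getElem?_append_left hi]

lemma fibWord_eq_P {k i : ℕ} (hi : i < (P k).length) :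
    (P k).getD i 0 = fibWord i := by
  show (P k).getD i 0 = (P (i+2)).getD i 0
  rcases le_total k (i+2) with h | h
  · exact (getD_of_prefix (P_prefix_mono h) hi).symm
  · have hi2 : i < (P (i+2)).length := by
      have := fib_ge (i+2)
      simp only [P_length]
      omega
    exact (getD_of_prefix (P_prefix_mono h) hi2)

@[simp] lemma fibPrefix_length (n : ℕ) : (fibPrefix n).length = n := by simp [fibPrefix]

lemma fibPrefix_getElem {n i : ℕ} (hi : i < n) :
    (fibPrefix n)[i]'(by simpa) = fibWord i := by
  simp [fibPrefix]

lemma P_eq_fibPrefix (k : ℕ) : P k = fibPrefix (Nat.fib (k+2)) := by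
  apply List.ext_getElem (by simp)
  intro i h1 h2
  rw [fibPrefix_getElem (by simpa using h2), ← fibWord_eq_P h1,
    List.getD_eq_getElem?_getD, List.getElem?_eq_getElem h1]
  rfl

lemma fibPrefix_add (m n : ℕ) : fibPrefix (m+n) = fibPrefix m ++ fw m n := by
  simp [fibPrefix, fw, List.range_add, Nat.add_comm, Nat.add_left_comm, Function.comp]

lemma fibPrefix_succ (n : ℕ) : fibPrefix (n+1) = fibPrefix n ++ [fibWord n] := by
  have := fibPrefix_add n 1
  simpa [fw, List.range_succ] using this

lemma fibPrefix_take (m n : ℕ) : (fibPrefix n).take m = fibPrefix (min m n) := by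
  simp [fibPrefix, ← List.map_take, List.take_range]

lemma prefix_fibPrefix {u : List ℕ} {L : ℕ} (h : u <+: fibPrefix L) :
    u = fibPrefix u.length := by
  have h1 : u.length ≤ L := by simpa using h.length_le
  have h2 := List.prefix_iff_eq_take.1 h
  rwa [fibPrefix_take, min_eq_left h1] at h2

lemma infix_fibPrefix_factor {x : List ℕ} {L : ℕ} (h : x <:+: fibPrefix L) :
    IsFibFactor x := by
  obtain ⟨s, t, hst⟩ := h
  have hL : L = s.length + (x.length + t.length) := by
    have := congrArg List.length hst
    simp at this
    omega
  rw [hL, fibPrefix_add, fw_add] at hst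
  have h1 : s ++ (x ++ t) = fibPrefix s.length ++ (fw s.length x.length ++ fw (s.length + x.length) t.length) := by
    simpa [List.append_assoc] using hst
  have h2 := List.append_inj_right h1 (by simp)
  have h3 := List.append_inj_left h2 (by simp)
  exact ⟨s.length, h3⟩

/-! ### The block structure induced by φ -/

def pp (m : ℕ) : ℕ := (fibPhi (fibPrefix m)).length

@[simp] lemma pp_zero : pp 0 = 0 := rfl

lemma fibPhi_prefix_mono {u v : List ℕ} (h : u <+: v) : fibPhi u <+: fibPhi v := by
  obtain ⟨w, rfl⟩ := h
  exact ⟨fibPhi w, (fibPhi_append u w).symm⟩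

lemma phi_fibPrefix (m : ℕ) : fibPhi (fibPrefix m) = fibPrefix (pp m) := by
  have hk : m ≤ Nat.fib (m+2) := by have := fib_ge m; omega
  have h1 : fibPrefix m <+: P m := by
    rw [P_eq_fibPrefix]
    rw [show fibPrefix m = (fibPrefix (Nat.fib (m+2))).take m by
      rw [fibPrefix_take, min_eq_left hk]]
    exact List.take_prefix _ _
  have h2 : fibPhi (fibPrefix m) <+: fibPrefix (Nat.fib (m+3)) := by
    have := fibPhi_prefix_mono h1
    rw [← P_succ] at this
    rwa [P_eq_fibPrefix] at this
  exact prefix_fibPrefix h2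

lemma pp_succ (m : ℕ) : pp (m+1) = pp m + (if fibWord m = 0 then 2 else 1) := by
  unfold pp
  rw [fibPrefix_succ, fibPhi_append]
  simp [fibPhi]
  split <;> simp

lemma block (m : ℕ) :
    fw (pp m) (if fibWord m = 0 then 2 else 1) = (if fibWord m = 0 then [0,1] else [0]) := by
  have h1 : fibPrefix (pp (m+1)) = fibPrefix (pp m) ++ fw (pp m) (if fibWord m = 0 then 2 else 1) := by
    rw [← fibPrefix_add, ← pp_succ]
  have h2 : fibPrefix (pp (m+1)) = fibPrefix (pp m) ++ (if fibWord m = 0 then [0,1] else [0]) := by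
    rw [← phi_fibPrefix, ← phi_fibPrefix, fibPrefix_succ, fibPhi_append]
    congr 1
    simp [fibPhi]
  rw [h1] at h2
  exact List.append_cancel_left h2

lemma fw_one (i : ℕ) : fw i 1 = [fibWord i] := by
  rw [fw_succ_left, fw_zero]

lemma fw_two (i : ℕ) : fw i 2 = [fibWord i, fibWord (i+1)] := by
  rw [fw_succ_left, fw_one]

lemma f_pp (m : ℕ) : fibWord (pp m) = 0 := by
  have h := block m
  by_cases h0 : fibWord m = 0 <;> simp [h0, fw_two, fw_one] at h <;> tauto

lemma f_pp1 {m : ℕ} (h0 : fibWord m = 0) : fibWord (pp m + 1) = 1 := by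
  have h := block m
  simp [h0, fw_two] at h
  tauto

lemma pp_succ_of_one {m : ℕ} (h0 : fibWord m = 1) : pp (m+1) = pp m + 1 := by
  rw [pp_succ]; simp [h0]

lemma pp_succ_of_zero {m : ℕ} (h0 : fibWord m = 0) : pp (m+1) = pp m + 2 := by
  rw [pp_succ]; simp [h0]

lemma pp_lt_succ (m : ℕ) : pp m < pp (m+1) := by
  rw [pp_succ]; split <;> omega

lemma pp_cover (j : ℕ) : ∃ m, pp m ≤ j ∧ j < pp (m+1) := by
  induction j with
  | zero => exact ⟨0, le_refl _, pp_lt_succ 0⟩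
  | succ j ih =>
      obtain ⟨m, h1, h2⟩ := ih
      rcases Nat.lt_or_ge (j+1) (pp (m+1)) with h | h
      · exact ⟨m, by omega, h⟩
      · refine ⟨m+1, h, ?_⟩
        have := pp_lt_succ (m+1)
        omega

lemma fibWord_01 (j : ℕ) : fibWord j = 0 ∨ fibWord j = 1 := by
  have hj : j < (P (j+2)).length := by
    have := fib_ge (j+2); simp only [P_length]; omega
  have h1 : fibWord j ∈ P (j+2) := by
    rw [← fibWord_eq_P hj, List.getD_eq_getElem?_getD, List.getElem?_eq_getElem hj]
    exact List.getElem_mem _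
  rw [P_succ] at h1
  simp only [fibPhi, List.mem_flatten, List.mem_map] at h1
  obtain ⟨l, ⟨c, _, rfl⟩, hmem⟩ := h1
  by_cases hc : c = 0 <;> simp [hc] at hmem <;> tauto

lemma f_char {m j : ℕ} (h1 : pp m ≤ j) (h2 : j < pp (m+1)) :
    (fibWord j = 0 → j = pp m) ∧
    (fibWord j = 1 → j = pp m + 1 ∧ fibWord m = 0 ∧ j + 1 = pp (m+1)) := by
  rcases fibWord_01 m with h0 | h0
  · have hw := pp_succ_of_zero h0
    have : j = pp m ∨ j = pp m + 1 := by omega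
    rcases this with rfl | rfl
    · simp [f_pp m]
    · simp [f_pp1 h0, h0, hw]
  · have hw := pp_succ_of_one h0
    have : j = pp m := by omega
    subst this
    simp [f_pp m]

lemma pred_boundary_one {M : ℕ} (hM : 1 ≤ M) (h : fibWord (pp M - 1) = 1) :
    fibWord (M - 1) = 0 := by
  obtain ⟨m, rfl⟩ : ∃ m, M = m + 1 := ⟨M - 1, by omega⟩
  have hlt := pp_lt_succ m
  have h1 : pp m ≤ pp (m+1) - 1 := by omega
  have h2 : pp (m+1) - 1 < pp (m+1) := by omega
  have := (f_char h1 h2).2 h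
  simpa using this.2.1

lemma pred_boundary_zero {M : ℕ} (hM : 1 ≤ M) (h : fibWord (pp M - 1) = 0) :
    fibWord (M - 1) = 1 := by
  obtain ⟨m, rfl⟩ : ∃ m, M = m + 1 := ⟨M - 1, by omega⟩
  have hlt := pp_lt_succ m
  have h1 : pp m ≤ pp (m+1) - 1 := by omega
  have h2 : pp (m+1) - 1 < pp (m+1) := by omega
  have h3 := (f_char h1 h2).1 h
  have h4 : pp (m+1) = pp m + 1 := by omega
  rcases fibWord_01 m with h0 | h0
  · rw [pp_succ_of_zero h0] at h4; omega
  · simpa using h0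

lemma one_succ_boundary {j : ℕ} (h : fibWord j = 1) : ∃ M, 1 ≤ M ∧ j + 1 = pp M := by
  obtain ⟨m, h1, h2⟩ := pp_cover j
  have h3 := (f_char h1 h2).2 h
  exact ⟨m+1, by omega, h3.2.2⟩

/-! ### Desubstitution parse -/

def parse : List ℕ → List ℕ × List ℕ
  | [] => ([], [])
  | [0] => ([], [0])
  | 0 :: 1 :: r => ((0 :: (parse r).1), (parse r).2)
  | 0 :: 0 :: r => ((1 :: (parse (0 :: r)).1), (parse (0 :: r)).2)
  | _ => ([], [])
termination_by l => l.length

@[simp] lemma parse_nil : parse [] = ([], []) := by rw [parse]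
@[simp] lemma parse_single : parse [0] = ([], [0]) := by rw [parse]
lemma parse_01 (r : List ℕ) : parse (0 :: 1 :: r) = ((0 :: (parse r).1), (parse r).2) := by
  rw [parse]
lemma parse_00 (r : List ℕ) : parse (0 :: 0 :: r) = ((1 :: (parse (0 :: r)).1), (parse (0 :: r)).2) := by
  rw [parse]

lemma parse_spec : ∀ n, ∀ m x, x = fw (pp m) n →
    fibPhi (parse x).1 ++ (parse x).2 = x ∧
    (parse x).1 = fw m (parse x).1.length ∧
    ((parse x).2 = [] ∨ (parse x).2 = [0]) ∧
    (x ≠ [] → (parse x).1.length < n) := by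
  intro n
  induction n using Nat.strong_induction_on with
  | _ n IH =>
    intro m x hx
    match n, hx with
    | 0, hx =>
        rw [fw_zero] at hx
        subst hx
        simp [fibPhi]
    | 1, hx =>
        rw [fw_one, f_pp] at hx
        subst hx
        simp [fibPhi]
    | (n+2), hx =>
        rcases fibWord_01 m with h0 | h0
        · -- block 01
          have hpp : pp (m+1) = pp m + 2 := pp_succ_of_zero h0
          have hx2 : x = 0 :: 1 :: fw (pp (m+1)) n := by
            rw [hx, fw_succ_left, fw_succ_left, f_pp, f_pp1 h0, hpp]
          obtain ⟨ih1, ih2, ih3, ih4⟩ := IH n (by omega) (m+1) (fw (pp (m+1)) n) rfl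
          rw [hx2, parse_01]
          refine ⟨?_, ?_, ih3, ?_⟩
          · rw [fibPhi_cons, if_pos rfl]
            simp [List.append_assoc, ih1]
          · simp only [List.length_cons]
            rw [fw_succ_left m, h0]
            congr 1
            all_goals exact ih2
          · intro _
            simp only [List.length_cons]
            by_cases hn : fw (pp (m+1)) n = []
            · have hn0 : (parse (fw (pp (m+1)) n)).1.length = 0 := by rw [hn]; simp
              omega
            · have := ih4 hn
              omega
        · -- block 0
          have hpp : pp (m+1) = pp m + 1 := pp_succ_of_one h0
          have hx2 : x = 0 :: fw (pp (m+1)) (n+1) := by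
            rw [hx, fw_succ_left, f_pp, hpp]
          have hnext : fw (pp (m+1)) (n+1) = 0 :: fw (pp (m+1) + 1) n := by
            rw [fw_succ_left, f_pp]
          obtain ⟨ih1, ih2, ih3, ih4⟩ := IH (n+1) (by omega) (m+1) (fw (pp (m+1)) (n+1)) rfl
          have hx3 : x = 0 :: 0 :: fw (pp (m+1) + 1) n := by rw [hx2, hnext]
          rw [hx3, parse_00, ← hnext]
          refine ⟨?_, ?_, ih3, ?_⟩
          · rw [fibPhi_cons, if_neg (by omega)]
            simp [List.append_assoc, ih1]
          · simp only [List.length_cons]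
            rw [fw_succ_left m, h0]
            congr 1
            all_goals exact ih2
          · intro _
            have : fw (pp (m+1)) (n+1) ≠ [] := by
              intro h
              have := congrArg List.length h; simp at this
            have := ih4 this
            simp only [List.length_cons]
            omega

lemma factor_cons_fw {c : ℕ} {x : List ℕ} (h : IsFibFactor (c :: x)) :
    ∃ i, fibWord i = c ∧ x = fw (i+1) x.length := by
  obtain ⟨i, hi⟩ := h
  rw [show (c :: x).length = x.length + 1 from by simp] at hi
  rw [show (List.range (x.length + 1)).map (fun t => fibWord (i + t)) = fw i (x.length + 1) from rfl,
    fw_succ_left] at hi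
  exact ⟨i, (List.cons.injEq _ _ _ _ ▸ hi).1.symm, (List.cons.injEq _ _ _ _ ▸ hi).2⟩

lemma leftSpecial_prefix : ∀ n (x : List ℕ), x.length = n →
    IsFibFactor (0 :: x) → IsFibFactor (1 :: x) → x = fibPrefix n := by
  intro n
  induction n using Nat.strong_induction_on with
  | _ n IH =>
    intro x hlen h0 h1
    match n, hlen with
    | 0, hlen =>
        rw [List.length_eq_zero_iff] at hlen
        simp [hlen, fibPrefix]
    | (n+1), hlen =>
        obtain ⟨i', hi'1, hi'x⟩ := factor_cons_fw h1
        obtain ⟨i, hi0, hix⟩ := factor_cons_fw h0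
        rw [hlen] at hi'x hix
        -- the occurrence after 1 is at a block boundary
        obtain ⟨M, hM1, hMpp⟩ := one_succ_boundary hi'1
        rw [hMpp] at hi'x
        have hfM : fibWord (M - 1) = 0 := by
          apply pred_boundary_one hM1
          rw [show pp M - 1 = i' from by omega]
          exact hi'1
        -- the occurrence after 0 is at a block boundary too
        obtain ⟨m₂, hm₂1, hm₂2⟩ := pp_cover (i+1)
        have hbdry : i + 1 = pp m₂ := by
          by_contra hne
          have hf1 : fibWord (i+1) = 1 := by
            rcases fibWord_01 (i+1) with hz | ho
            · exact absurd ((f_char hm₂1 hm₂2).1 hz) hne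
            · exact ho
          -- but x starts with f (pp M) = 0
          have e1 : x = fw (i+1) (n+1) := hix
          have e2 : x = fw (pp M) (n+1) := hi'x
          rw [fw_succ_left, hf1] at e1
          rw [fw_succ_left, f_pp] at e2
          rw [e1] at e2
          simp at e2
        have hm₂pos : 1 ≤ m₂ := by
          by_contra h
          have : m₂ = 0 := by omega
          rw [this] at hbdry
          simp at hbdry
        have hfm₂ : fibWord (m₂ - 1) = 1 := by
          apply pred_boundary_zero hm₂pos
          rw [show pp m₂ - 1 = i from by omega]
          exact hi0
        -- parse x at both boundaries
        obtain ⟨hp1, hp2, hp3, hp4⟩ := parse_spec (n+1) M x hi'x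
        obtain ⟨_, hq2, _, _⟩ := parse_spec (n+1) m₂ x (by rw [hbdry] at hix; exact hix)
        set v := (parse x).1 with hv
        set t := (parse x).2 with ht
        -- v is left special
        have hfac0 : IsFibFactor (0 :: v) := by
          have : (0 : ℕ) :: v = fw (M - 1) (v.length + 1) := by
            rw [fw_succ_left, show M - 1 + 1 = M from by omega, hfM, ← hp2]
          rw [this]
          have := factor_fw (M-1) (v.length + 1)
          exact this
        have hfac1 : IsFibFactor (1 :: v) := by
          have : (1 : ℕ) :: v = fw (m₂ - 1) (v.length + 1) := by
            rw [fw_succ_left, show m₂ - 1 + 1 = m₂ from by omega, hfm₂, ← hq2]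
          rw [this]
          exact factor_fw (m₂-1) (v.length + 1)
        have hxne : x ≠ [] := by
          intro h
          rw [h] at hlen
          simp at hlen
        have hvlt := hp4 hxne
        have hvpre : v = fibPrefix v.length := IH v.length (by omega) v rfl hfac0 hfac1
        -- conclude
        have hx : x = fibPrefix (pp v.length) ++ t := by
          rw [← hp1, hvpre, phi_fibPrefix]
          rw [← hvpre]
        rcases hp3 with ht0 | ht1
        · rw [ht0, List.append_nil] at hx
          have : pp v.length = n + 1 := by
            have := congrArg List.length hx
            simp [hlen] at this
            omega
          rw [hx, this]
        · rw [ht1] at hx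
          have hx2 : x = fibPrefix (pp v.length + 1) := by
            rw [fibPrefix_succ, f_pp, hx]
          have : pp v.length + 1 = n + 1 := by
            have := congrArg List.length hx2
            simp [hlen] at this
            omega
          rw [hx2, this]

/-! ### Palindromic prefixes and closure under reversal -/

def CC : ℕ → List ℕ
  | 0 => []
  | (j+1) => P j ++ CC j

def st (j : ℕ) : List ℕ := if j % 2 = 0 then [1,0] else [0,1]

lemma st_rev (j : ℕ) : (st j).reverse = st (j+1) := by
  unfold st
  rcases Nat.mod_two_eq_zero_or_one j with h | h
  · rw [if_pos h, if_neg (by omega)]; rfl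
  · rw [if_neg (by omega), if_pos (by omega)]; rfl

lemma CC_alt (j : ℕ) : CC (j+2) = P (j+2) ++ CC j := by
  show P (j+1) ++ CC (j+1) = _
  show P (j+1) ++ (P j ++ CC j) = _
  rw [P_add_two, List.append_assoc]

lemma P_CC : ∀ j, P (j+1) = CC j ++ st (j+1) := by
  intro j
  induction j using Nat.strong_induction_on with
  | _ j IH =>
    match j with
    | 0 => rfl
    | 1 => rfl
    | (j+2) =>
        rw [P_add_two, IH j (by omega), CC_alt]
        rw [show st (j+2+1) = st (j+1) from by unfold st; congr 1; simp [Nat.add_mod]]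
        rw [List.append_assoc]

lemma CC_pal : ∀ j, (CC j).reverse = CC j := by
  intro j
  induction j using Nat.strong_induction_on with
  | _ j IH =>
    match j with
    | 0 => rfl
    | 1 => rfl
    | (j+2) =>
        show (P (j+1) ++ CC (j+1)).reverse = CC (j+2)
        rw [List.reverse_append, IH (j+1) (by omega), P_CC j, List.reverse_append,
          IH j (by omega), st_rev]
        rw [show CC (j+2) = P (j+2) ++ CC j from CC_alt j, P_CC (j+1)]
        rw [List.append_assoc]

lemma CC_length (j : ℕ) : (CC j).length + 2 = Nat.fib (j+3) := by
  have h := P_CC j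
  have := congrArg List.length h
  simp only [List.length_append, P_length] at this
  have hst : (st (j+1)).length = 2 := by unfold st; split <;> rfl
  rw [hst] at this
  rw [show j+1+2 = j+3 from rfl] at this
  omega

lemma CC_eq_fibPrefix (j : ℕ) : CC j = fibPrefix (CC j).length := by
  apply prefix_fibPrefix (L := Nat.fib (j+3))
  rw [show (j:ℕ)+3 = (j+1)+2 from rfl, ← P_eq_fibPrefix, P_CC j]
  exact ⟨st (j+1), rfl⟩

lemma rev_factor {x : List ℕ} (h : IsFibFactor x) : IsFibFactor x.reverse := by
  obtain ⟨i, hx⟩ := h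
  set n := x.length with hn
  have hx' : x = fw i n := hx
  set j := i + n with hj
  have hlen : i + n ≤ (CC j).length := by
    have h1 := CC_length j
    have h2 := fib_ge (j+1)
    rw [show (j:ℕ)+1+2 = j+3 from rfl] at h2
    omega
  set L := (CC j).length with hL
  have hinf : x <:+: fibPrefix L := by
    refine ⟨fibPrefix i, fw (i+n) (L - (i+n)), ?_⟩
    calc fibPrefix i ++ x ++ fw (i+n) (L-(i+n))
        = fibPrefix i ++ (fw i n ++ fw (i+n) (L-(i+n))) := by rw [hx', List.append_assoc]
      _ = fibPrefix i ++ fw i (n + (L-(i+n))) := by rw [fw_add]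
      _ = fibPrefix (i + (n + (L-(i+n)))) := by rw [fibPrefix_add]
      _ = fibPrefix L := by congr 1; omega
  have hrev : x.reverse <:+: fibPrefix L := by
    have h1 : x.reverse <:+: (fibPrefix L).reverse := List.reverse_infix.2 hinf
    rwa [← CC_eq_fibPrefix, CC_pal, CC_eq_fibPrefix] at h1
  exact infix_fibPrefix_factor hrev

/-! ### Prefixes are left-special -/

lemma occ_prefix {k n : ℕ} (hn : n ≤ Nat.fib (k+2)) :
    fw (Nat.fib (k+3)) n = fibPrefix n := by
  have h1 : fibPrefix (Nat.fib (k+4)) = fibPrefix (Nat.fib (k+3)) ++ fw (Nat.fib (k+3)) (Nat.fib (k+2)) := by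
    rw [← fibPrefix_add]
    congr 1
    have : Nat.fib (k+4) = Nat.fib (k+2) + Nat.fib (k+3) := Nat.fib_add_two
    omega
  have h2 : fibPrefix (Nat.fib (k+4)) = fibPrefix (Nat.fib (k+3)) ++ P k := by
    rw [show (k:ℕ)+4 = (k+2)+2 from rfl, ← P_eq_fibPrefix, P_add_two,
      show (k:ℕ)+3 = (k+1)+2 from rfl, ← P_eq_fibPrefix]
  rw [h2] at h1
  have h3 : P k = fw (Nat.fib (k+3)) (Nat.fib (k+2)) := List.append_cancel_left h1
  have h4 : fw (Nat.fib (k+3)) (Nat.fib (k+2)) = fw (Nat.fib (k+3)) n ++ fw (Nat.fib (k+3) + n) (Nat.fib (k+2) - n) := by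
    rw [← fw_add]
    congr 1
    omega
  have h5 : P k = fibPrefix n ++ fw (Nat.fib (k+3)) n ++ fw (Nat.fib (k+3) + n) (Nat.fib (k+2) - n) → True := fun _ => trivial
  -- two decompositions of P k
  have h6 : fibPrefix n ++ fw n (Nat.fib (k+2) - n) = fw (Nat.fib (k+3)) n ++ fw (Nat.fib (k+3) + n) (Nat.fib (k+2) - n) := by
    rw [← h4, ← h3, P_eq_fibPrefix]
    rw [show Nat.fib (k+2) = n + (Nat.fib (k+2) - n) from by omega, fibPrefix_add]
    congr 1
    congr 1
    omega
  exact List.append_inj_left h6.symm (by simp)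

lemma last_letter (k : ℕ) :
    fibWord (Nat.fib (k+3) - 1) = (if (k+1) % 2 = 0 then 0 else 1) := by
  have hpos : 0 < Nat.fib (k+3) := Nat.fib_pos.2 (by omega)
  have h1 : fibPrefix (Nat.fib (k+3)) = CC k ++ st (k+1) := by
    rw [show (k:ℕ)+3 = (k+1)+2 from rfl, ← P_eq_fibPrefix]
    exact P_CC k
  have h2 : fibPrefix (Nat.fib (k+3)) = fibPrefix (Nat.fib (k+3) - 1) ++ [fibWord (Nat.fib (k+3) - 1)] := by
    rw [← fibPrefix_succ]
    congr 1
    omega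
  have h3 := h2.symm.trans h1
  rcases Nat.mod_two_eq_zero_or_one (k+1) with h | h
  · rw [if_pos h]
    rw [show st (k+1) = [1,0] from by unfold st; rw [if_pos h],
      show CC k ++ [1,0] = (CC k ++ [1]) ++ [0] from by simp] at h3
    have h4 := congrArg List.getLast? h3
    rw [List.getLast?_concat, List.getLast?_concat] at h4
    exact Option.some.inj h4
  · rw [if_neg (by omega)]
    rw [show st (k+1) = [0,1] from by unfold st; rw [if_neg (by omega)],
      show CC k ++ [0,1] = (CC k ++ [0]) ++ [1] from by simp] at h3
    have h4 := congrArg List.getLast? h3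
    rw [List.getLast?_concat, List.getLast?_concat] at h4
    exact Option.some.inj h4


lemma prefix_leftSpecial {n c : ℕ} (hc : c = 0 ∨ c = 1) :
    IsFibFactor (c :: fibPrefix n) := by
  set k : ℕ := if c = 0 then 2*n+1 else 2*n with hk
  have hpar : (if (k+1) % 2 = 0 then (0:ℕ) else 1) = c := by
    rcases hc with rfl | rfl
    · rw [hk]; norm_num [Nat.add_mod, Nat.mul_mod]
    · rw [hk]; norm_num [Nat.add_mod, Nat.mul_mod]
  have hn : n ≤ Nat.fib (k+2) := by
    have h1 := fib_ge k
    have : n ≤ k := by rw [hk]; split <;> omega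
    omega
  have hpos : 0 < Nat.fib (k+3) := Nat.fib_pos.2 (by omega)
  have key : c :: fibPrefix n = fw (Nat.fib (k+3) - 1) (n+1) := by
    rw [fw_succ_left, show Nat.fib (k+3) - 1 + 1 = Nat.fib (k+3) from by omega,
      occ_prefix hn, last_letter k, hpar]
  rw [key]
  exact factor_fw _ _

/-- For every n, the unique right-special factor of length n of the Fibonacci
word is the reversal of its length-n prefix: a word x of length n satisfies
that both x0 and x1 are factors iff x is the reversed prefix. -/
theorem fibWord_right_special :
    ∀ (n : ℕ) (x : List ℕ),
      (x.length = n ∧ IsFibFactor (x ++ [0]) ∧ IsFibFactor (x ++ [1])) ↔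
        x = (fibPrefix n).reverse := by
  intro n x
  constructor
  · rintro ⟨hlen, h0, h1⟩
    have r0 : IsFibFactor (0 :: x.reverse) := by
      have := rev_factor h0
      simpa using this
    have r1 : IsFibFactor (1 :: x.reverse) := by
      have := rev_factor h1
      simpa using this
    have hrl : x.reverse.length = n := by simpa using hlen
    have := leftSpecial_prefix n x.reverse hrl r0 r1
    rw [← this, List.reverse_reverse]
  · rintro rfl
    refine ⟨by simp, ?_, ?_⟩
    · have h := rev_factor (prefix_leftSpecial (n := n) (Or.inl rfl))
      simpa using h
    · have h := rev_factor (prefix_leftSpecial (n := n) (Or.inr rfl))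
      simpa using h
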